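/- arXiv:2510.01653 — 2 statements merged into one kernel-verified Lean document; each statement's English description precedes it below -/
import Mathlib

section
/- Let 1 ≤ p < ∞ and let w be a weight on ℝⁿ. Suppose there is C > 0 such that for every cube Q and every measurable E ⊂ Q, |E|/|Q| ≤ C(w(E)/w(Q))^{1/p}. Then for every φ : ℝⁿ × (0,∞) → (0,∞) that is almost decreasing in r and satisfies φ(x,r) ≍ φ(y,r) for |x−y| ≤ r, and every f ∈ L¹_loc(ℝⁿ): sup_Q φ(Q)‖(f−f_Q)χ_Q‖_{L^{p,1}(w)}/‖χ_Q‖_{L^{p,1}(w)} ≥ c‖f‖_{L_{1,φ}} for some c > 0 independent of f. -/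
open MeasureTheory ENNReal NNReal Set

noncomputable section

/-- Euclidean space `ℝⁿ`. -/
abbrev En (n : ℕ) : Type := EuclideanSpace ℝ (Fin n)

/-- The axis-parallel half-open cube `Q(x,r) = x + [-r, r)ⁿ`. -/
def Cube {n : ℕ} (x : En n) (r : ℝ) : Set (En n) :=
  {y | ∀ i, x i - r ≤ y i ∧ y i < x i + r}

/-- The uncentered Hardy–Littlewood maximal operator over axis-parallel cubes. -/
def maximal {n : ℕ} (f : En n → ℝ≥0∞) (x : En n) : ℝ≥0∞ :=
  ⨆ (c : En n) (r : ℝ) (_ : 0 < r) (_ : x ∈ Cube c r),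
    (∫⁻ y in Cube c r, f y) / volume (Cube c r)

/-- The associate (Köthe dual) functional `‖g‖_{X'} = sup_{‖h‖_X ≤ 1} ∫ |g h|`. -/
def associate {n : ℕ} (N : (En n → ℝ≥0∞) → ℝ≥0∞) (g : En n → ℝ≥0∞) : ℝ≥0∞ :=
  ⨆ (h : En n → ℝ≥0∞) (_ : N h ≤ 1), ∫⁻ x, g x * h x

/-- A quasi-Banach function quasi-norm with the ideal (lattice) property. -/
structure IsQuasiBanachFN {n : ℕ} (N : (En n → ℝ≥0∞) → ℝ≥0∞) : Prop where
  smul : ∀ (c : ℝ≥0) (f : En n → ℝ≥0∞), N (fun x => (c : ℝ≥0∞) * f x) = (c : ℝ≥0∞) * N f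
  quasi_triangle : ∃ K : ℝ≥0∞, 1 ≤ K ∧ K ≠ ∞ ∧
    ∀ f g : En n → ℝ≥0∞, N (f + g) ≤ K * (N f + N g)
  ideal : ∀ f g : En n → ℝ≥0∞, (∀ᵐ x ∂volume, g x ≤ f x) → N g ≤ N f

/-- A quasi-rBfs: a quasi-Banach function quasi-norm with the ideal property such that
indicators of cubes have finite quasi-norm. -/
structure IsQuasiRBFS {n : ℕ} (N : (En n → ℝ≥0∞) → ℝ≥0∞) extends IsQuasiBanachFN N : Prop where
  cube_lt_top : ∀ (c : En n) (r : ℝ), 0 < r → N ((Cube c r).indicator 1) < ∞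

/-- A Banach function norm: ideal property, homogeneity and the triangle inequality. -/
structure IsBanachFN {n : ℕ} (N : (En n → ℝ≥0∞) → ℝ≥0∞) : Prop where
  smul : ∀ (c : ℝ≥0) (f : En n → ℝ≥0∞), N (fun x => (c : ℝ≥0∞) * f x) = (c : ℝ≥0∞) * N f
  add_le : ∀ f g : En n → ℝ≥0∞, N (f + g) ≤ N f + N g
  ideal : ∀ f g : En n → ℝ≥0∞, (∀ᵐ x ∂volume, g x ≤ f x) → N g ≤ N f

/-- `φ` is almost decreasing in its second variable. -/
def AlmostDecr {n : ℕ} (φ : En n → ℝ → ℝ) : Prop :=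
  ∃ C > (0 : ℝ), ∀ (x : En n) (r s : ℝ), 0 < s → s ≤ r → φ x r ≤ C * φ x s

/-- `φ(x,r) ≍ φ(y,r)` whenever `|x - y| ≤ r`. -/
def NearComparable {n : ℕ} (φ : En n → ℝ → ℝ) : Prop :=
  ∃ C ≥ (1 : ℝ), ∀ (x y : En n) (r : ℝ), 0 < r → ‖x - y‖ ≤ r →
    C⁻¹ * φ y r ≤ φ x r ∧ φ x r ≤ C * φ y r

/-- `φ` is positive. -/
def PhiPos {n : ℕ} (φ : En n → ℝ → ℝ) : Prop :=
  ∀ (x : En n) (r : ℝ), 0 < r → 0 < φ x r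

/-- The average `f_Q` of `f` over the cube `Q(c,r)`. -/
def cubeAvg {n : ℕ} (c : En n) (r : ℝ) (f : En n → ℝ) : ℝ :=
  ⨍ z in Cube c r, f z

/-- The pointwise oscillation `|f - f_Q|` (as an `ℝ≥0∞`-valued function). -/
def osc {n : ℕ} (c : En n) (r : ℝ) (f : En n → ℝ) : En n → ℝ≥0∞ :=
  fun y => (‖f y - cubeAvg c r f‖₊ : ℝ≥0∞)

/-- The Campanato norm `‖f‖_{L_{1,φ}} = sup_Q φ(Q) |Q|⁻¹ ∫_Q |f - f_Q|`. -/
def campanato {n : ℕ} (φ : En n → ℝ → ℝ) (f : En n → ℝ) : ℝ≥0∞ :=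
  ⨆ (c : En n) (r : ℝ) (_ : 0 < r),
    ENNReal.ofReal (φ c r) * ((∫⁻ y in Cube c r, osc c r f y) / volume (Cube c r))

/-- The quantity `sup_Q φ(Q) ‖(f - f_Q)χ_Q‖_X / ‖χ_Q‖_X`. -/
def ratioNorm {n : ℕ} (N : (En n → ℝ≥0∞) → ℝ≥0∞) (φ : En n → ℝ → ℝ) (f : En n → ℝ) : ℝ≥0∞ :=
  ⨆ (c : En n) (r : ℝ) (_ : 0 < r),
    ENNReal.ofReal (φ c r) *
      (N ((Cube c r).indicator (osc c r f)) / N ((Cube c r).indicator 1))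

/-- The vector-valued maximal bound `‖Σ (M f_j)^η‖_X ≤ C ‖Σ |f_j|^η‖_X`. -/
def VectorMaximal {n : ℕ} (N : (En n → ℝ≥0∞) → ℝ≥0∞) (η : ℝ) (C : ℝ≥0∞) : Prop :=
  ∀ f : ℕ → En n → ℝ≥0∞, (∀ j, Measurable (f j)) →
    N (fun x => ∑' j, maximal (f j) x ^ η) ≤ C * N (fun x => ∑' j, f j x ^ η)

/-- The weighted distribution function `w({|f| > α})`. -/
def wDist {n : ℕ} (w : En n → ℝ≥0∞) (f : En n → ℝ) (α : ℝ) : ℝ≥0∞ :=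
  ∫⁻ x in {x | α < |f x|}, w x

/-- The weighted decreasing rearrangement `f*_w(t) = inf {α > 0 : w(|f| > α) ≤ t}`. -/
def wRearr {n : ℕ} (w : En n → ℝ≥0∞) (f : En n → ℝ) (t : ℝ≥0∞) : ℝ≥0∞ :=
  ⨅ (α : ℝ) (_ : 0 < α) (_ : wDist w f α ≤ t), ENNReal.ofReal α

/-- The weighted Lorentz `L^{p,1}(w)` norm `∫₀^∞ t^{1/p} f*_w(t) dt/t`. -/
def wLorentz1 {n : ℕ} (p : ℝ) (w : En n → ℝ≥0∞) (f : En n → ℝ) : ℝ≥0∞ :=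
  ∫⁻ t in Ioi (0 : ℝ), ENNReal.ofReal (t ^ (1 / p - 1)) * wRearr w f (ENNReal.ofReal t)


/-! ### Auxiliary lemmas -/

lemma cube_eq {n : ℕ} (c : En n) (r : ℝ) :
    Cube c r = (MeasurableEquiv.toLp 2 (Fin n → ℝ)).symm ⁻¹'
      (univ.pi fun i => Ico (c i - r) (c i + r)) := by
  ext y
  simp [Cube, MeasurableEquiv.coe_toLp_symm, Set.mem_pi, Ico, and_comm]

lemma cube_meas {n : ℕ} (c : En n) (r : ℝ) : MeasurableSet (Cube c r) := by
  rw [cube_eq]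
  exact (MeasurableEquiv.toLp 2 (Fin n → ℝ)).symm.measurable
    (MeasurableSet.univ_pi fun i => measurableSet_Ico)

lemma cube_vol {n : ℕ} (c : En n) (r : ℝ) :
    volume (Cube c r) = ENNReal.ofReal (2*r) ^ n := by
  rw [cube_eq, (EuclideanSpace.volume_preserving_symm_measurableEquiv_toLp (Fin n)).measure_preimage
    (MeasurableSet.univ_pi fun i => measurableSet_Ico).nullMeasurableSet]
  rw [volume_pi_pi]
  simp [Real.volume_Ico]
  ring_nf
  rw [ENNReal.ofReal_mul' (by norm_num : (0:ℝ) ≤ 2), mul_pow, ENNReal.ofReal_ofNat]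

lemma wDist_anti {n : ℕ} (w : En n → ℝ≥0∞) (f : En n → ℝ) : Antitone (wDist w f) :=
  fun _ _ hab => lintegral_mono_set (fun _ hx => lt_of_le_of_lt hab hx)

lemma wRearr_le {n : ℕ} (w : En n → ℝ≥0∞) (f : En n → ℝ) {t : ℝ≥0∞} {β : ℝ}
    (hβ : 0 < β) (h : wDist w f β ≤ t) : wRearr w f t ≤ ENNReal.ofReal β :=
  iInf_le_of_le β (iInf_le_of_le hβ (iInf_le_of_le h le_rfl))

lemma wRearr_ge {n : ℕ} (w : En n → ℝ≥0∞) (f : En n → ℝ) {t : ℝ≥0∞} {α : ℝ}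
    (hα : 0 < α) (h : t < wDist w f α) : ENNReal.ofReal α ≤ wRearr w f t := by
  refine le_iInf fun β => le_iInf fun hβ => le_iInf fun hle => ?_
  refine ENNReal.ofReal_le_ofReal ?_
  by_contra hc
  push_neg at hc
  exact absurd (le_trans (wDist_anti w f hc.le) hle) (not_le.mpr h)

lemma meas_lt_wRearr {n : ℕ} (w : En n → ℝ≥0∞) (f : En n → ℝ) (t : ℝ≥0∞) :
    volume ({α : ℝ | t < wDist w f α} ∩ Ioi 0) ≤ wRearr w f t := by
  rcases eq_or_ne (wRearr w f t) ∞ with hR | hR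
  · simp [hR]
  · have hsub : {α : ℝ | t < wDist w f α} ∩ Ioi 0 ⊆ Ioc 0 (wRearr w f t).toReal := by
      rintro α ⟨h1, h2⟩
      exact ⟨h2, (ENNReal.ofReal_le_iff_le_toReal hR).mp (wRearr_ge w f h2 h1)⟩
    calc volume ({α : ℝ | t < wDist w f α} ∩ Ioi 0) ≤ volume (Ioc 0 (wRearr w f t).toReal) :=
          measure_mono hsub
      _ = ENNReal.ofReal (wRearr w f t).toReal := by rw [Real.volume_Ioc]; ring_nf
      _ ≤ wRearr w f t := ENNReal.ofReal_toReal_le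

section ind
variable {n : ℕ} (w : En n → ℝ≥0∞) (Q : Set (En n))

lemma wDist_ind_lt {β : ℝ} (h0 : 0 < β) (h1 : β < 1) :
    wDist w (Q.indicator 1) β = ∫⁻ x in Q, w x := by
  have hset : {x | β < |Q.indicator 1 x|} = Q := by
    ext x
    by_cases hx : x ∈ Q
    · simp only [mem_setOf_eq, Set.indicator_of_mem hx, Pi.one_apply, abs_one]
      exact iff_of_true h1 hx
    · simp only [mem_setOf_eq, Set.indicator_of_notMem hx, abs_zero]
      exact iff_of_false (not_lt.mpr h0.le) hx
  unfold wDist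
  rw [hset]

lemma wDist_ind_ge {β : ℝ} (h1 : 1 ≤ β) : wDist w (Q.indicator 1) β = 0 := by
  unfold wDist
  have : {x | β < |Q.indicator 1 x|} = ∅ := by
    ext x
    refine iff_of_false ?_ (notMem_empty x)
    by_cases hx : x ∈ Q
    · simp only [mem_setOf_eq, Set.indicator_of_mem hx, Pi.one_apply, abs_one]
      exact not_lt.mpr h1
    · simp only [mem_setOf_eq, Set.indicator_of_notMem hx, abs_zero]
      exact not_lt.mpr (by linarith)
  simp [this]

lemma wRearr_ind (t : ℝ≥0∞) :
    wRearr w (Q.indicator 1) t = if t < ∫⁻ x in Q, w x then 1 else 0 := by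
  split_ifs with ht
  · refine le_antisymm ?_ ?_
    · refine ENNReal.le_of_forall_pos_le_add fun ε hε _ => ?_
      calc wRearr w (Q.indicator 1) t ≤ ENNReal.ofReal (1 + ε) :=
            wRearr_le w _ (by positivity)
              (by rw [wDist_ind_ge w Q (by simp [hε.le] : (1:ℝ) ≤ 1 + ε)]; exact zero_le)
        _ = 1 + (ε : ℝ≥0∞) := by
            rw [ENNReal.ofReal_add zero_le_one ε.coe_nonneg]
            simp
    · refine le_iInf fun β => le_iInf fun hβ => le_iInf fun hle => ?_
      have h1β : 1 ≤ β := by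
        by_contra hc
        push_neg at hc
        rw [wDist_ind_lt w Q hβ hc] at hle
        exact absurd hle (not_le.mpr ht)
      calc (1:ℝ≥0∞) = ENNReal.ofReal 1 := by simp
        _ ≤ ENNReal.ofReal β := ENNReal.ofReal_le_ofReal h1β
  · push_neg at ht
    refine le_antisymm (ENNReal.le_of_forall_pos_le_add fun ε hε _ => ?_) zero_le
    have hε' : (0:ℝ) < min (ε:ℝ) 2⁻¹ := lt_min (by exact_mod_cast hε) (by norm_num)
    calc wRearr w (Q.indicator 1) t ≤ ENNReal.ofReal (min (ε:ℝ) 2⁻¹) :=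
          wRearr_le w _ hε'
            (by rw [wDist_ind_lt w Q hε' (lt_of_le_of_lt (min_le_right _ _) (by norm_num))]
                exact ht)
      _ ≤ ENNReal.ofReal (ε:ℝ) := ENNReal.ofReal_le_ofReal (min_le_left _ _)
      _ = (ε : ℝ≥0∞) := ENNReal.ofReal_coe_nnreal
      _ ≤ 0 + (ε:ℝ≥0∞) := by simp

lemma calc1 {p : ℝ} (hp : 1 ≤ p) {s : ℝ} (hs : 0 ≤ s) :
    ∫⁻ t in Ioo (0:ℝ) s, ENNReal.ofReal (t ^ (1/p - 1)) = ENNReal.ofReal (p * s ^ (1/p)) := by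
  have hp0 : 0 < p := lt_of_lt_of_le one_pos hp
  have hip : 0 < 1/p := by positivity
  have hc : (-1:ℝ) < 1/p - 1 := by linarith
  have hint : IntegrableOn (fun t : ℝ => t ^ (1/p - 1)) (Ioc 0 s) volume :=
    (intervalIntegrable_iff_integrableOn_Ioc_of_le hs).mp
      (intervalIntegral.intervalIntegrable_rpow' hc)
  rw [restrict_Ioo_eq_restrict_Ioc,
    ← ofReal_integral_eq_lintegral_ofReal hint ?_]
  · congr 1
    rw [← intervalIntegral.integral_of_le hs, integral_rpow (Or.inl hc)]
    rw [Real.zero_rpow (by linarith : 1/p - 1 + 1 ≠ 0)]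
    have : 1/p - 1 + 1 = 1/p := by ring
    rw [this]
    field_simp
    ring
  · filter_upwards [ae_restrict_mem measurableSet_Ioc] with t ht
    exact Real.rpow_nonneg ht.1.le _

lemma layer_pow {p : ℝ} (hp : 1 ≤ p) {S : ℝ≥0∞} (hS : S ≠ ∞) :
    ∫⁻ t in Ioi (0:ℝ),
      ENNReal.ofReal (t ^ (1/p - 1)) * ({u : ℝ | ENNReal.ofReal u < S}.indicator 1 t) =
    ENNReal.ofReal p * S ^ (1/p) := by
  have hp0 : 0 < p := lt_of_lt_of_le one_pos hp
  have hT : MeasurableSet {u : ℝ | ENNReal.ofReal u < S} :=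
    measurableSet_lt ENNReal.measurable_ofReal measurable_const
  have h1 : ∀ t : ℝ, ENNReal.ofReal (t ^ (1/p - 1)) * ({u : ℝ | ENNReal.ofReal u < S}.indicator 1 t)
      = {u : ℝ | ENNReal.ofReal u < S}.indicator (fun u => ENNReal.ofReal (u ^ (1/p - 1))) t := by
    intro t
    by_cases ht : ENNReal.ofReal t < S <;>
      simp [Set.indicator_apply, ht]
  simp only [h1]
  rw [lintegral_indicator hT, Measure.restrict_restrict hT]
  have hset : {u : ℝ | ENNReal.ofReal u < S} ∩ Ioi 0 = Ioo 0 S.toReal := by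
    ext t
    simp only [mem_inter_iff, mem_setOf_eq, mem_Ioi, mem_Ioo]
    constructor
    · rintro ⟨h1, h2⟩
      exact ⟨h2, (ENNReal.ofReal_lt_iff_lt_toReal h2.le hS).mp h1⟩
    · rintro ⟨h1, h2⟩
      exact ⟨(ENNReal.ofReal_lt_iff_lt_toReal h1.le hS).mpr h2, h1⟩
  rw [hset, calc1 hp ENNReal.toReal_nonneg, ENNReal.ofReal_mul hp0.le]
  congr 1
  rw [← ENNReal.ofReal_rpow_of_nonneg ENNReal.toReal_nonneg (by positivity : (0:ℝ) ≤ 1/p),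
    ENNReal.ofReal_toReal hS]

lemma wLorentz1_ind {p : ℝ} (hp : 1 ≤ p) (hWt : (∫⁻ x in Q, w x) ≠ ∞) :
    wLorentz1 p w (Q.indicator 1) = ENNReal.ofReal p * (∫⁻ x in Q, w x) ^ (1/p) := by
  unfold wLorentz1
  have h1 : ∀ t : ℝ, wRearr w (Q.indicator 1) (ENNReal.ofReal t)
      = {u : ℝ | ENNReal.ofReal u < ∫⁻ x in Q, w x}.indicator 1 t := by
    intro t
    rw [wRearr_ind]
    by_cases ht : ENNReal.ofReal t < ∫⁻ x in Q, w x <;> simp [Set.indicator_apply, ht]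
  simp only [h1]
  exact layer_pow hp hWt

end ind

lemma percube {n : ℕ} {p : ℝ} (hp : 1 ≤ p) (w : En n → ℝ≥0∞) {C : ℝ≥0∞}
    (hC0 : C ≠ 0) (hCt : C ≠ ∞)
    (hyp : ∀ (c : En n) (r : ℝ), 0 < r → ∀ E ⊆ Cube c r, MeasurableSet E →
      volume E / volume (Cube c r) ≤
        C * ((∫⁻ x in E, w x) / ∫⁻ x in Cube c r, w x) ^ (1 / p))
    {f : En n → ℝ} (hf : LocallyIntegrable f volume) (c : En n) (r : ℝ) (hr : 0 < r) :
    C⁻¹ * ((∫⁻ y in Cube c r, osc c r f y) / volume (Cube c r)) ≤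
      wLorentz1 p w ((Cube c r).indicator fun y => f y - cubeAvg c r f) /
        wLorentz1 p w ((Cube c r).indicator 1) := by
  have hp0 : 0 < p := lt_of_lt_of_le one_pos hp
  have hip : (0:ℝ) < 1/p := by positivity
  set Q := Cube c r with hQ
  have hQm : MeasurableSet Q := cube_meas c r
  have hV0 : volume Q ≠ 0 := by
    rw [hQ, cube_vol]
    exact pow_ne_zero n (ENNReal.ofReal_pos.mpr (by linarith)).ne'
  have hVt : volume Q ≠ ∞ := by
    rw [hQ, cube_vol]
    exact (ENNReal.pow_lt_top ENNReal.ofReal_lt_top).ne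
  set W := ∫⁻ x in Q, w x with hW
  have hQQ := hyp c r hr Q subset_rfl hQm
  rw [ENNReal.div_self hV0 hVt] at hQQ
  have hW0 : W ≠ 0 := by
    intro h
    rw [← hW, h, ENNReal.zero_div, ENNReal.zero_rpow_of_pos hip, mul_zero] at hQQ
    simpa using hQQ
  have hWt : W ≠ ∞ := by
    intro h
    rw [← hW, h, ENNReal.div_top, ENNReal.zero_rpow_of_pos hip, mul_zero] at hQQ
    simpa using hQQ
  have hWp0 : W ^ (1/p) ≠ 0 := (ENNReal.rpow_pos (pos_iff_ne_zero.mpr hW0) hWt).ne'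
  have hWpt : W ^ (1/p) ≠ ∞ := ENNReal.rpow_ne_top_of_nonneg hip.le hWt
  -- measurable representative
  have hfm : AEMeasurable f volume := hf.aestronglyMeasurable.aemeasurable
  set f' := hfm.mk f with hf'def
  have hf'm : Measurable f' := hfm.measurable_mk
  have hff' : f =ᵐ[volume] f' := hfm.ae_eq_mk
  set a := cubeAvg c r f with ha
  set g : En n → ℝ := Q.indicator (fun y => f' y - a) with hg
  have hgm : Measurable g := (hf'm.sub measurable_const).indicator hQm
  have hgg0 : (Q.indicator fun y => f y - a) =ᵐ[volume] g := by
    filter_upwards [hff'] with x hx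
    rw [hg]
    by_cases hxQ : x ∈ Q
    · rw [Set.indicator_of_mem hxQ, Set.indicator_of_mem hxQ, hx]
    · rw [Set.indicator_of_notMem hxQ, Set.indicator_of_notMem hxQ]
  -- replace the Lorentz norm of the oscillation
  have hLeq : wLorentz1 p w (Q.indicator fun y => f y - a) = wLorentz1 p w g := by
    have hwd : ∀ α : ℝ, wDist w (Q.indicator fun y => f y - a) α = wDist w g α := by
      intro α
      unfold wDist
      refine setLIntegral_congr ?_
      filter_upwards [hgg0] with x hx
      show (α < |(Q.indicator fun y => f y - a) x|) = (α < |g x|)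
      rw [hx]
    have hwr : ∀ t, wRearr w (Q.indicator fun y => f y - a) t = wRearr w g t := by
      intro t
      unfold wRearr
      simp only [hwd]
    unfold wLorentz1
    simp only [hwr]
  -- layer cake for the oscillation integral
  set A := ∫⁻ y in Q, osc c r f y with hA
  have hA1 : A = ∫⁻ t in Ioi (0:ℝ), volume {x | t < |g x|} := by
    have e1 : A = ∫⁻ y in Q, ENNReal.ofReal |f y - a| := by
      rw [hA]
      refine lintegral_congr fun y => ?_
      simp only [osc, ← enorm_eq_nnnorm, Real.enorm_eq_ofReal_abs, ← ha]
    have e2 : (∫⁻ y in Q, ENNReal.ofReal |f y - a|) = ∫⁻ y in Q, ENNReal.ofReal |f' y - a| := by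
      refine lintegral_congr_ae (ae_restrict_of_ae ?_)
      filter_upwards [hff'] with y hy
      rw [hy]
    have e3 : (∫⁻ y in Q, ENNReal.ofReal |f' y - a|) = ∫⁻ y, ENNReal.ofReal |g y| := by
      rw [← lintegral_indicator hQm]
      refine lintegral_congr fun y => ?_
      by_cases hy : y ∈ Q
      · rw [Set.indicator_of_mem hy, hg, Set.indicator_of_mem hy]
      · rw [Set.indicator_of_notMem hy, hg, Set.indicator_of_notMem hy, abs_zero,
          ENNReal.ofReal_zero]
    rw [e1, e2, e3]
    exact lintegral_eq_lintegral_meas_lt volume (ae_of_all _ fun y => abs_nonneg (g y))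
      hgm.abs.aemeasurable
  -- level sets are inside the cube
  have hEQ : ∀ t : ℝ, 0 < t → {x | t < |g x|} ⊆ Q := by
    intro t ht x hx
    by_contra hxQ
    rw [mem_setOf_eq, hg, Set.indicator_of_notMem hxQ, abs_zero] at hx
    linarith
  have hWdle : ∀ t : ℝ, 0 < t → wDist w g t ≤ W := by
    intro t ht
    exact lintegral_mono_set (hEQ t ht)
  -- distribution estimate from the A(p,1)-type hypothesis
  set K := C * volume Q * (W ^ (1/p))⁻¹ with hK
  have hKt : K ≠ ∞ := by
    rw [hK]
    exact ENNReal.mul_ne_top (ENNReal.mul_ne_top hCt hVt) (ENNReal.inv_ne_top.mpr hWp0)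
  have hE : ∀ t : ℝ, 0 < t → volume {x | t < |g x|} ≤ K * (wDist w g t) ^ (1/p) := by
    intro t ht
    have hEm : MeasurableSet {x | t < |g x|} := measurableSet_lt measurable_const hgm.abs
    have h2 := hyp c r hr _ (hEQ t ht) hEm
    have h3 : volume {x | t < |g x|} = volume {x | t < |g x|} / volume Q * volume Q :=
      (ENNReal.div_mul_cancel hV0 hVt).symm
    calc volume {x | t < |g x|}
        = volume {x | t < |g x|} / volume Q * volume Q := h3
      _ ≤ C * ((wDist w g t / W) ^ (1/p)) * volume Q := by
          exact mul_le_mul_left h2 _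
      _ = K * (wDist w g t) ^ (1/p) := by
          rw [ENNReal.div_rpow_of_nonneg _ _ hip.le, hK, div_eq_mul_inv, div_eq_mul_inv]
          ring
  set J := ∫⁻ t in Ioi (0:ℝ), (wDist w g t) ^ (1/p) with hJ
  have hAJ : A ≤ K * J := by
    rw [hA1, hJ, ← lintegral_const_mul' K _ hKt]
    refine lintegral_mono_ae ?_
    filter_upwards [ae_restrict_mem measurableSet_Ioi] with t ht
    exact hE t ht
  -- Tonelli
  set S : Set (ℝ × ℝ) := {q | ENNReal.ofReal q.2 < wDist w g q.1} with hS
  have hwdm : Measurable (wDist w g) := (wDist_anti w g).measurable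
  have hSm : MeasurableSet S :=
    measurableSet_lt (ENNReal.measurable_ofReal.comp measurable_snd) (hwdm.comp measurable_fst)
  have hJL : ENNReal.ofReal p * J ≤ wLorentz1 p w g := by
    have hmeas : AEMeasurable
        (Function.uncurry fun α t : ℝ => ENNReal.ofReal (t ^ (1/p - 1)) * S.indicator 1 (α, t))
        ((volume.restrict (Ioi (0:ℝ))).prod (volume.restrict (Ioi (0:ℝ)))) := by
      have huncurry : (Function.uncurry fun α t : ℝ =>
          ENNReal.ofReal (t ^ (1/p - 1)) * S.indicator 1 (α, t))
          = fun q : ℝ × ℝ => ENNReal.ofReal (q.2 ^ (1/p - 1)) * S.indicator 1 q := by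
        funext q
        simp [Function.uncurry]
      rw [huncurry]
      exact ((by fun_prop : Measurable fun q : ℝ × ℝ => ENNReal.ofReal (q.2 ^ (1/p - 1))).mul
        (measurable_one.indicator hSm)).aemeasurable
    have e5 : ∀ α ∈ Ioi (0:ℝ), ENNReal.ofReal p * (wDist w g α) ^ (1/p)
        = ∫⁻ t in Ioi (0:ℝ), ENNReal.ofReal (t ^ (1/p - 1)) * S.indicator 1 (α, t) := by
      intro α hα
      have hfin : wDist w g α ≠ ∞ := ne_top_of_le_ne_top hWt (hWdle α hα)
      have heq : (fun t : ℝ => ENNReal.ofReal (t ^ (1/p - 1)) * S.indicator 1 (α, t))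
          = fun t : ℝ => ENNReal.ofReal (t ^ (1/p - 1)) *
              ({u : ℝ | ENNReal.ofReal u < wDist w g α}.indicator 1 t) := by
        funext t
        by_cases h : ENNReal.ofReal t < wDist w g α <;>
          simp [hS, Set.indicator_apply, h]
      rw [heq, layer_pow hp hfin]
    have e6 : ∀ t : ℝ, (∫⁻ α in Ioi (0:ℝ), ENNReal.ofReal (t ^ (1/p - 1)) * S.indicator 1 (α, t))
        ≤ ENNReal.ofReal (t ^ (1/p - 1)) * wRearr w g (ENNReal.ofReal t) := by
      intro t
      rw [lintegral_const_mul' _ _ ENNReal.ofReal_ne_top]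
      refine mul_le_mul_right ?_ _
      have hsm : MeasurableSet {α : ℝ | ENNReal.ofReal t < wDist w g α} :=
        measurableSet_lt measurable_const hwdm
      have heq2 : (fun α : ℝ => S.indicator 1 (α, t))
          = {α : ℝ | ENNReal.ofReal t < wDist w g α}.indicator (1 : ℝ → ℝ≥0∞) := by
        funext α
        by_cases h : ENNReal.ofReal t < wDist w g α <;>
          simp [hS, Set.indicator_apply, h]
      rw [heq2, lintegral_indicator_one hsm, Measure.restrict_apply hsm]
      exact meas_lt_wRearr w g _
    calc ENNReal.ofReal p * J
        = ∫⁻ α in Ioi (0:ℝ), ENNReal.ofReal p * (wDist w g α) ^ (1/p) := by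
          rw [hJ, lintegral_const_mul' _ _ ENNReal.ofReal_ne_top]
      _ = ∫⁻ α in Ioi (0:ℝ), ∫⁻ t in Ioi (0:ℝ),
            ENNReal.ofReal (t ^ (1/p - 1)) * S.indicator 1 (α, t) :=
          setLIntegral_congr_fun measurableSet_Ioi e5
      _ = ∫⁻ t in Ioi (0:ℝ), ∫⁻ α in Ioi (0:ℝ),
            ENNReal.ofReal (t ^ (1/p - 1)) * S.indicator 1 (α, t) :=
          lintegral_lintegral_swap hmeas
      _ ≤ ∫⁻ t in Ioi (0:ℝ), ENNReal.ofReal (t ^ (1/p - 1)) * wRearr w g (ENNReal.ofReal t) :=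
          lintegral_mono e6
      _ = wLorentz1 p w g := rfl
  -- conclude
  rw [hLeq, wLorentz1_ind w Q hp (hW ▸ hWt), ← hW]
  have hD0 : ENNReal.ofReal p * W ^ (1/p) ≠ 0 :=
    mul_ne_zero (ENNReal.ofReal_pos.mpr hp0).ne' hWp0
  have hDt : ENNReal.ofReal p * W ^ (1/p) ≠ ∞ :=
    ENNReal.mul_ne_top ENNReal.ofReal_ne_top hWpt
  rw [ENNReal.le_div_iff_mul_le (Or.inl hD0) (Or.inl hDt)]
  calc C⁻¹ * (A / volume Q) * (ENNReal.ofReal p * W ^ (1/p))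
      ≤ C⁻¹ * (K * J / volume Q) * (ENNReal.ofReal p * W ^ (1/p)) :=
        mul_le_mul_left (mul_le_mul_right (ENNReal.div_le_div_right hAJ _) _) _
    _ = (C⁻¹ * C) * ((W ^ (1/p))⁻¹ * W ^ (1/p)) * (volume Q * (volume Q)⁻¹) *
          (ENNReal.ofReal p * J) := by
        rw [hK, div_eq_mul_inv]
        ring
    _ = ENNReal.ofReal p * J := by
        rw [ENNReal.inv_mul_cancel hC0 hCt, ENNReal.inv_mul_cancel hWp0 hWpt,
          ENNReal.mul_inv_cancel hV0 hVt]
        simp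
    _ ≤ wLorentz1 p w g := hJL

/-- under the `A(p,1)` condition on `w`, the Campanato norm is dominated by the
weighted Lorentz `L^{p,1}(w)`-ratio norm. -/
theorem statement9 {n : ℕ} (p : ℝ) (hp : 1 ≤ p) (w : En n → ℝ≥0∞) (hw : Measurable w)
    (hAp1 : ∃ C : ℝ≥0∞, 0 < C ∧ C ≠ ∞ ∧ ∀ (c : En n) (r : ℝ), 0 < r →
      ∀ E ⊆ Cube c r, MeasurableSet E →
        volume E / volume (Cube c r) ≤
          C * ((∫⁻ x in E, w x) / ∫⁻ x in Cube c r, w x) ^ (1 / p))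
    (φ : En n → ℝ → ℝ) (hφ : PhiPos φ) (hdec : AlmostDecr φ) (hnear : NearComparable φ) :
    ∃ c0 : ℝ≥0∞, 0 < c0 ∧ c0 ≠ ∞ ∧ ∀ f : En n → ℝ, LocallyIntegrable f volume →
      c0 * campanato φ f ≤ ⨆ (c : En n) (r : ℝ) (_ : 0 < r),
        ENNReal.ofReal (φ c r) *
          (wLorentz1 p w ((Cube c r).indicator fun y => f y - cubeAvg c r f) /
            wLorentz1 p w ((Cube c r).indicator 1)) := by
  obtain ⟨C, hC0, hCt, hyp⟩ := hAp1
  refine ⟨C⁻¹, ENNReal.inv_pos.mpr hCt, ENNReal.inv_ne_top.mpr hC0.ne', fun f hf => ?_⟩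
  unfold campanato
  rw [ENNReal.mul_iSup]
  refine iSup_le fun c => ?_
  rw [ENNReal.mul_iSup]
  refine iSup_le fun r => ?_
  rw [ENNReal.mul_iSup]
  refine iSup_le fun hr => ?_
  refine le_iSup_of_le c (le_iSup_of_le r (le_iSup_of_le hr ?_))
  rw [mul_left_comm]
  exact mul_le_mul_right (percube hp w hC0.ne' hCt hyp hf c r hr) _
end
end

section
/- Let 1 < η < ∞. For every nonnegative measurable f and g on ℝⁿ, ∫_{ℝⁿ}(Mf(x))^η g(x)dx ≤ C_{n,η} ∫_{ℝⁿ} f(x)^η Mg(x)dx, where M is the Hardy–Littlewood maximal operator (Fefferman–Stein dual inequality). -/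
open MeasureTheory ENNReal NNReal Set

noncomputable section

variable {n : ℕ}

lemma measurable_eval (i : Fin n) : Measurable fun y : En n => y i := by
  fun_prop

lemma continuous_eval (i : Fin n) : Continuous fun y : En n => y i := by
  fun_prop

lemma measurableSet_cube (c : En n) (r : ℝ) : MeasurableSet (Cube c r) := by
  have : Cube c r = ⋂ i, (fun y : En n => y i) ⁻¹' Set.Ico (c i - r) (c i + r) := by
    ext y; simp [Cube, Set.mem_Ico]
  rw [this]
  exact MeasurableSet.iInter fun i => (measurable_eval i) measurableSet_Ico

lemma volume_cube (c : En n) (r : ℝ) :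
    volume (Cube c r) = ENNReal.ofReal (2*r) ^ n := by
  have e := EuclideanSpace.volume_preserving_symm_measurableEquiv_toLp (Fin n)
  have hs : MeasurableSet (Set.univ.pi fun i : Fin n => Set.Ico (c i - r) (c i + r)) :=
    MeasurableSet.univ_pi fun i => measurableSet_Ico
  have hpre : (MeasurableEquiv.toLp 2 (Fin n → ℝ)).symm ⁻¹'
      (Set.univ.pi fun i => Set.Ico (c i - r) (c i + r)) = Cube c r := by
    ext y
    simp [Cube, Set.mem_univ_pi, MeasurableEquiv.coe_toLp, Set.mem_Ico]
  rw [← hpre, e.measure_preimage hs.nullMeasurableSet, volume_pi_pi]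
  have : ∀ i : Fin n, volume (Set.Ico (c i - r) (c i + r)) = ENNReal.ofReal (2*r) := by
    intro i; rw [Real.volume_Ico]; ring_nf
  simp only [this, Finset.prod_const, Finset.card_univ, Fintype.card_fin]


lemma cube_volume_pos {c : En n} {r : ℝ} (hr : 0 < r) : 0 < volume (Cube c r) := by
  rw [volume_cube]; positivity

lemma cube_volume_ne_top (c : En n) (r : ℝ) : volume (Cube c r) ≠ ∞ := by
  rw [volume_cube]; exact pow_ne_top ofReal_ne_top

lemma cube_subset_cube {c : En n} {r r' : ℝ} (h : r ≤ r') : Cube c r ⊆ Cube c r' := by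
  intro y hy i
  obtain ⟨h1, h2⟩ := hy i
  constructor <;> [linarith; linarith]

lemma vitali_pair {c c' : En n} {r r' : ℝ} (hr' : 0 < r') (hle : r' ≤ r)
    (hne : (Cube c r ∩ Cube c' r').Nonempty) : Cube c' r' ⊆ Cube c (3 * r) := by
  obtain ⟨z, hz, hz'⟩ := hne
  intro y hy i
  obtain ⟨a1, a2⟩ := hz i
  obtain ⟨b1, b2⟩ := hz' i
  obtain ⟨d1, d2⟩ := hy i
  constructor <;> [linarith; linarith]

lemma le_maximal {f : En n → ℝ≥0∞} {x c : En n} {r : ℝ} (hr : 0 < r) (hx : x ∈ Cube c r) :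
    (∫⁻ y in Cube c r, f y) / volume (Cube c r) ≤ maximal f x :=
  le_iSup_of_le c (le_iSup_of_le r (le_iSup_of_le hr (le_iSup_of_le hx le_rfl)))

lemma lt_maximal {f : En n → ℝ≥0∞} {x c : En n} {r : ℝ} {lam : ℝ≥0∞} (hr : 0 < r)
    (hx : x ∈ Cube c r) (h : lam * volume (Cube c r) < ∫⁻ y in Cube c r, f y) :
    lam < maximal f x := by
  refine lt_of_lt_of_le ?_ (le_maximal hr hx)
  rw [ENNReal.lt_div_iff_mul_lt (Or.inl (cube_volume_pos hr).ne') (Or.inl (cube_volume_ne_top c r))]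
  exact h

def OpenCube (c : En n) (r : ℝ) : Set (En n) := {y | ∀ i, |y i - c i| < r}

lemma isOpen_openCube (c : En n) (r : ℝ) : IsOpen (OpenCube c r) := by
  have : OpenCube c r = ⋂ i, (fun y : En n => y i) ⁻¹' Set.Ioo (c i - r) (c i + r) := by
    ext y; simp only [OpenCube, Set.mem_setOf_eq, Set.mem_iInter, Set.mem_preimage, Set.mem_Ioo,
      abs_lt]
    constructor <;> (intro h i; obtain ⟨h1, h2⟩ := h i; constructor <;> linarith)
  rw [this]
  exact isOpen_iInter_of_finite fun i => (continuous_eval i).isOpen_preimage _ isOpen_Ioo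

lemma openCube_subset_cube (c : En n) (r : ℝ) : OpenCube c r ⊆ Cube c r := by
  intro y hy i
  have := abs_lt.1 (hy i)
  constructor <;> linarith [this.1, this.2]

lemma cube_subset_openCube {c : En n} {r r' : ℝ} (h : r < r') :
    Cube c r ⊆ OpenCube c r' := by
  intro y hy i
  obtain ⟨h1, h2⟩ := hy i
  rw [abs_lt]
  constructor <;> linarith

lemma exists_good_cube {f : En n → ℝ≥0∞} {x : En n} {lam : ℝ≥0∞}
    (h : lam < maximal f x) :
    ∃ (c : En n) (R : ℝ), 0 < R ∧ x ∈ OpenCube c R ∧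
      lam * volume (Cube c R) < ∫⁻ y in Cube c R, f y := by
  have hlam : lam ≠ ∞ := h.ne_top
  simp only [maximal, lt_iSup_iff] at h
  obtain ⟨c, r, hr, hx, havg⟩ := h
  have key : lam * volume (Cube c r) < ∫⁻ y in Cube c r, f y := by
    rwa [ENNReal.lt_div_iff_mul_lt (Or.inl (cube_volume_pos hr).ne')
      (Or.inl (cube_volume_ne_top c r))] at havg
  by_cases hI : (∫⁻ y in Cube c r, f y) = ∞
  · refine ⟨c, r + 1, by linarith, cube_subset_openCube (by linarith) hx, ?_⟩
    have h1 : (∫⁻ y in Cube c (r+1), f y) = ∞ :=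
      top_le_iff.1 (hI ▸ lintegral_mono_set (cube_subset_cube (by linarith)))
    rw [h1]
    exact (ENNReal.mul_ne_top hlam (cube_volume_ne_top c (r+1))).lt_top
  · have hreal : lam.toReal * (2*r)^n < (∫⁻ y in Cube c r, f y).toReal := by
      rw [← ENNReal.toReal_lt_toReal (ENNReal.mul_ne_top hlam (cube_volume_ne_top c r)) hI] at key
      rwa [ENNReal.toReal_mul, volume_cube, ENNReal.toReal_pow,
        ENNReal.toReal_ofReal (by linarith)] at key
    have hcont : ContinuousAt (fun R : ℝ => lam.toReal * (2*R)^n) r := by fun_prop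
    have hev : ∀ᶠ R in nhds r, lam.toReal * (2*R)^n < (∫⁻ y in Cube c r, f y).toReal :=
      hcont.eventually_lt continuousAt_const hreal
    have hev' : ∀ᶠ R in nhdsWithin r (Set.Ioi r),
        lam.toReal * (2*R)^n < (∫⁻ y in Cube c r, f y).toReal ∧ r < R :=
      (hev.filter_mono nhdsWithin_le_nhds).and self_mem_nhdsWithin
    obtain ⟨R, hRlt, hrR⟩ := hev'.exists
    refine ⟨c, R, by linarith, cube_subset_openCube hrR hx, ?_⟩
    have h2R : (0:ℝ) ≤ 2*R := by linarith
    have hlhs : lam * volume (Cube c R) = ENNReal.ofReal (lam.toReal * (2*R)^n) := by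
      rw [volume_cube, ← ENNReal.ofReal_pow h2R]
      conv_lhs => rw [← ENNReal.ofReal_toReal hlam]
      rw [← ENNReal.ofReal_mul ENNReal.toReal_nonneg]
    calc lam * volume (Cube c R) = ENNReal.ofReal (lam.toReal * (2*R)^n) := hlhs
      _ < ENNReal.ofReal ((∫⁻ y in Cube c r, f y).toReal) := by
          apply ENNReal.ofReal_lt_ofReal_iff ?_ |>.2 hRlt
          calc (0:ℝ) ≤ lam.toReal * (2*R)^n := by positivity
            _ < _ := hRlt
      _ = ∫⁻ y in Cube c r, f y := ENNReal.ofReal_toReal hI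
      _ ≤ ∫⁻ y in Cube c R, f y := lintegral_mono_set (cube_subset_cube hrR.le)

lemma isOpen_maximal_gt (f : En n → ℝ≥0∞) (lam : ℝ≥0∞) :
    IsOpen {x : En n | lam < maximal f x} := by
  rw [isOpen_iff_forall_mem_open]
  intro x hx
  obtain ⟨c, R, hR, hxo, hkey⟩ := exists_good_cube hx
  refine ⟨OpenCube c R, fun y hy => ?_, isOpen_openCube c R, hxo⟩
  exact lt_maximal hR (openCube_subset_cube c R hy) hkey

lemma measurable_maximal (f : En n → ℝ≥0∞) : Measurable (maximal f) := by
  apply measurable_of_Ioi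
  intro lam
  exact (isOpen_maximal_gt f lam).measurableSet


lemma exists_compact_exhaustion {E : Set (En n)} (hE : IsOpen E) :
    ∃ K : ℕ → Set (En n), Monotone K ∧ (∀ m, IsCompact (K m)) ∧ (∀ m, K m ⊆ E) ∧
      (⋃ m, K m) = E := by
  set K : ℕ → Set (En n) :=
    fun m => Metric.closedBall 0 m ∩ {x | (1:ℝ≥0∞)/(m+1) ≤ EMetric.infEdist x Eᶜ} with hK
  have hsubE : ∀ m, K m ⊆ E := by
    intro m x hx
    by_contra hxE
    have h0 : EMetric.infEdist x Eᶜ = 0 := EMetric.infEdist_zero_of_mem hxE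
    have h2 : (1:ℝ≥0∞)/(m+1) ≤ EMetric.infEdist x Eᶜ := hx.2
    rw [h0] at h2
    simp only [nonpos_iff_eq_zero, ENNReal.div_eq_zero_iff] at h2
    rcases h2 with h | h
    · exact one_ne_zero h
    · exact (ENNReal.add_lt_top.2 ⟨ENNReal.natCast_lt_top m, ENNReal.one_lt_top⟩).ne h
  refine ⟨K, ?_, ?_, hsubE, ?_⟩
  · intro a b hab
    apply Set.inter_subset_inter
    · exact Metric.closedBall_subset_closedBall (by exact_mod_cast hab)
    · intro x hx
      have hx' : (1:ℝ≥0∞)/(a+1) ≤ EMetric.infEdist x Eᶜ := hx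
      have hle : ((a:ℝ≥0∞)+1) ≤ ((b:ℝ≥0∞)+1) :=
        add_le_add_left (by exact_mod_cast hab) 1
      exact le_trans (ENNReal.div_le_div_left hle 1) hx'
  · intro m
    apply (isCompact_closedBall 0 m).inter_right
    exact isClosed_le continuous_const EMetric.continuous_infEdist
  · apply Set.Subset.antisymm (Set.iUnion_subset hsubE)
    intro x hxE
    obtain ⟨ε, hε, hball⟩ := Metric.isOpen_iff.1 hE x hxE
    have hinf : ENNReal.ofReal ε ≤ EMetric.infEdist x Eᶜ := by
      apply EMetric.le_infEdist.2
      intro y hy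
      have : ε ≤ dist x y := by
        by_contra hlt
        push_neg at hlt
        exact hy (hball (by rwa [Metric.mem_ball, dist_comm]))
      rw [edist_dist]
      exact ENNReal.ofReal_le_ofReal this
    obtain ⟨m, hm⟩ := exists_nat_gt (max ‖x‖ ε⁻¹)
    have hm1 : ‖x‖ ≤ m := le_of_lt (lt_of_le_of_lt (le_max_left _ _) hm)
    have hm2 : ε⁻¹ < m := lt_of_le_of_lt (le_max_right _ _) hm
    refine Set.mem_iUnion.2 ⟨m, ⟨?_, ?_⟩⟩
    · simpa [Metric.mem_closedBall, dist_zero_right] using hm1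
    · refine le_trans ?_ hinf
      have h1 : (1:ℝ≥0∞)/(m+1) = ENNReal.ofReal (1/((m:ℝ)+1)) := by
        rw [ENNReal.ofReal_div_of_pos (by positivity), ENNReal.ofReal_one,
          ENNReal.ofReal_add (by positivity) zero_le_one, ENNReal.ofReal_natCast,
          ENNReal.ofReal_one]
      show (1:ℝ≥0∞)/(m+1) ≤ ENNReal.ofReal ε
      rw [h1]
      apply ENNReal.ofReal_le_ofReal
      rw [div_le_iff₀ (by positivity)]
      have h3 : 1 ≤ ε * m := by
        rw [← mul_inv_cancel₀ hε.ne']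
        exact mul_le_mul_of_nonneg_left hm2.le hε.le
      nlinarith [hε, h3]

lemma finite_vitali {ι : Type*} [DecidableEq ι] (c : ι → En n) (R : ι → ℝ)
    (t : Finset ι) : (∀ i ∈ t, 0 < R i) →
      ∃ s ⊆ t, ((s : Set ι).PairwiseDisjoint fun i => Cube (c i) (R i)) ∧
        ∀ i ∈ t, ∃ j ∈ s, Cube (c i) (R i) ⊆ Cube (c j) (3 * R j) := by
  classical
  induction t using Finset.strongInduction with
  | _ t ih =>
    intro ht
    rcases t.eq_empty_or_nonempty with rfl | hne
    · exact ⟨∅, Finset.Subset.refl _, by simp, by simp⟩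
    · obtain ⟨j, hj, hmax⟩ := t.exists_max_image R hne
      set t' := t.filter (fun i => Disjoint (Cube (c i) (R i)) (Cube (c j) (R j))) with ht'def
      have hcj : c j ∈ Cube (c j) (R j) := by
        intro i; constructor <;> nlinarith [ht j hj]
      have hjt' : j ∉ t' := by
        simp only [ht'def, Finset.mem_filter, not_and]
        intro _
        intro hdis
        have := Set.disjoint_left.1 hdis hcj
        exact this hcj
      have hss : t' ⊂ t :=
        Finset.ssubset_iff_of_subset (Finset.filter_subset _ _) |>.2 ⟨j, hj, hjt'⟩
      obtain ⟨s', hs't', hdisj, hcov⟩ := ih t' hss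
        (fun i hi => ht i (Finset.filter_subset _ _ hi))
      have hjs' : j ∉ s' := fun h => hjt' (hs't' h)
      refine ⟨insert j s', Finset.insert_subset hj (hs't'.trans (Finset.filter_subset _ _)),
        ?_, ?_⟩
      · rw [Finset.coe_insert]
        apply Set.PairwiseDisjoint.insert hdisj
        intro k hk _
        have hk' : k ∈ t' := hs't' hk
        rw [ht'def, Finset.mem_filter] at hk'
        exact (hk'.2).symm
      · intro i hi
        by_cases hdi : Disjoint (Cube (c i) (R i)) (Cube (c j) (R j))
        · have : i ∈ t' := by rw [ht'def, Finset.mem_filter]; exact ⟨hi, hdi⟩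
          obtain ⟨k, hk, hsub⟩ := hcov i this
          exact ⟨k, Finset.mem_insert_of_mem hk, hsub⟩
        · refine ⟨j, Finset.mem_insert_self j s', ?_⟩
          rw [Set.not_disjoint_iff_nonempty_inter] at hdi
          exact vitali_pair (ht i hi) (hmax i hi) (by rwa [Set.inter_comm] at hdi)

lemma three_pow_ne_top : ((3:ℝ≥0∞)^n) ≠ ∞ := by
  exact ENNReal.pow_ne_top (by simp)

lemma volume_cube_triple (c : En n) {R : ℝ} (hR : 0 ≤ R) :
    volume (Cube c (3*R)) = 3^n * volume (Cube c R) := by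
  rw [volume_cube, volume_cube, ← mul_pow]
  congr 1
  rw [show (2:ℝ) * (3*R) = 3 * (2*R) by ring, ENNReal.ofReal_mul (by norm_num)]
  norm_num

lemma key_est {f g : En n → ℝ≥0∞} (hf : Measurable f) {c : En n} {R : ℝ} {lam : ℝ≥0∞}
    (hR : 0 < R) (h : lam * volume (Cube c R) ≤ ∫⁻ y in Cube c R, f y) :
    lam * ∫⁻ y in Cube c (3*R), g y ≤ 3^n * ∫⁻ y in Cube c R, f y * maximal g y := by
  set A := ∫⁻ y in Cube c (3*R), g y with hA
  set v := volume (Cube c R) with hv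
  have hv0 : v ≠ 0 := (cube_volume_pos hR).ne'
  have hvt : v ≠ ∞ := cube_volume_ne_top c R
  have hV : volume (Cube c (3*R)) = 3^n * v := volume_cube_triple c hR.le
  have hMg : ∀ x ∈ Cube c R, A ≤ 3^n * v * maximal g x := by
    intro x hx
    have hx3 : x ∈ Cube c (3*R) := cube_subset_cube (by linarith) hx
    have h1 : A / volume (Cube c (3*R)) ≤ maximal g x := le_maximal (by linarith) hx3
    rw [ENNReal.div_le_iff_le_mul (Or.inl (by rw [hV]; exact mul_ne_zero (by simp) hv0))
      (Or.inl (by rw [hV]; exact ENNReal.mul_ne_top three_pow_ne_top hvt))] at h1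
    calc A ≤ maximal g x * volume (Cube c (3*R)) := h1
      _ = 3^n * v * maximal g x := by rw [hV]; ring
  have hcancel : (lam * A) * v ≤ (3^n * ∫⁻ y in Cube c R, f y * maximal g y) * v := by
    calc (lam * A) * v = A * (lam * v) := by ring
      _ ≤ A * ∫⁻ y in Cube c R, f y := mul_le_mul_right h A
      _ = ∫⁻ y in Cube c R, A * f y := (lintegral_const_mul A hf).symm
      _ ≤ ∫⁻ y in Cube c R, (3^n * v * maximal g y) * f y :=
          setLIntegral_mono' (measurableSet_cube c R)
            (fun x hx => mul_le_mul_left (hMg x hx) (f x))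
      _ = ∫⁻ y in Cube c R, (3^n * v) * (f y * maximal g y) := by
          congr 1; funext y; ring
      _ = (3^n * v) * ∫⁻ y in Cube c R, f y * maximal g y :=
          lintegral_const_mul' _ _ (ENNReal.mul_ne_top three_pow_ne_top hvt)
      _ = (3^n * ∫⁻ y in Cube c R, f y * maximal g y) * v := by ring
  exact (ENNReal.mul_le_mul_iff_left hv0 hvt).1 hcancel

lemma weak_type (f g : En n → ℝ≥0∞) (hf : Measurable f) (lam : ℝ≥0∞) :
    lam * ∫⁻ x in {x | lam < maximal f x}, g x ≤
      3^n * ∫⁻ x, f x * maximal g x := by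
  classical
  set E := {x : En n | lam < maximal f x} with hEdef
  have hE : IsOpen E := isOpen_maximal_gt f lam
  obtain ⟨K, hmono, hcomp, hsubE, hunion⟩ := exists_compact_exhaustion hE
  set μg := volume.withDensity g with hμg
  have happ : ∀ s : Set (En n), MeasurableSet s → μg s = ∫⁻ x in s, g x :=
    fun s hs => withDensity_apply g hs
  have hKbound : ∀ m, lam * μg (K m) ≤ 3^n * ∫⁻ x, f x * maximal g x := by
    intro m
    have hKE : K m ⊆ E := hsubE m
    choose c R hR hmem hkey using fun x : ↥(K m) => exists_good_cube (hKE x.2)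
    have hcover : K m ⊆ ⋃ x : ↥(K m), OpenCube (c x) (R x) := by
      intro x hx
      exact Set.mem_iUnion.2 ⟨⟨x, hx⟩, hmem ⟨x, hx⟩⟩
    obtain ⟨t, ht⟩ := (hcomp m).elim_finite_subcover _
      (fun x => isOpen_openCube (c x) (R x)) hcover
    obtain ⟨s, hst, hdisj, hcov⟩ := finite_vitali c R t (fun i _ => hR i)
    have hsub1 : K m ⊆ ⋃ j ∈ s, Cube (c j) (3 * R j) := by
      intro x hx
      obtain ⟨i, hit, hxi⟩ := Set.mem_iUnion₂.1 (ht hx)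
      obtain ⟨j, hjs, hsubij⟩ := hcov i hit
      exact Set.mem_iUnion₂.2 ⟨j, hjs, hsubij (openCube_subset_cube _ _ hxi)⟩
    calc lam * μg (K m) ≤ lam * μg (⋃ j ∈ s, Cube (c j) (3 * R j)) :=
          mul_le_mul_right (measure_mono hsub1) lam
      _ ≤ lam * ∑ j ∈ s, μg (Cube (c j) (3 * R j)) :=
          mul_le_mul_right (measure_biUnion_finset_le s _) lam
      _ = ∑ j ∈ s, lam * μg (Cube (c j) (3 * R j)) := Finset.mul_sum _ _ _
      _ ≤ ∑ j ∈ s, 3^n * ∫⁻ y in Cube (c j) (R j), f y * maximal g y := by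
          apply Finset.sum_le_sum
          intro j _
          rw [happ _ (measurableSet_cube _ _)]
          exact key_est hf (hR j) (hkey j).le
      _ = 3^n * ∑ j ∈ s, ∫⁻ y in Cube (c j) (R j), f y * maximal g y :=
          (Finset.mul_sum _ _ _).symm
      _ = 3^n * ∫⁻ y in ⋃ j ∈ s, Cube (c j) (R j), f y * maximal g y := by
          rw [lintegral_biUnion_finset hdisj (fun j _ => measurableSet_cube _ _)]
      _ ≤ 3^n * ∫⁻ y, f y * maximal g y :=
          mul_le_mul_right (setLIntegral_le_lintegral _ _) _
  calc lam * ∫⁻ x in E, g x = lam * μg E := by rw [happ E hE.measurableSet]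
    _ = lam * ⨆ m, μg (K m) := by rw [← hunion, hmono.directed_le.measure_iUnion]
    _ = ⨆ m, lam * μg (K m) := by rw [ENNReal.mul_iSup]
    _ ≤ 3^n * ∫⁻ x, f x * maximal g x := iSup_le hKbound

/-- Truncation of `f` below level `τ`. -/
def trunc {n : ℕ} (τ : ℝ≥0∞) (f : En n → ℝ≥0∞) : En n → ℝ≥0∞ :=
  fun x => if τ < f x then f x else 0

lemma measurable_trunc {f : En n → ℝ≥0∞} (hf : Measurable f) (τ : ℝ≥0∞) :
    Measurable (trunc τ f) :=
  Measurable.ite (measurableSet_lt measurable_const hf) hf measurable_const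

lemma le_trunc_add (τ : ℝ≥0∞) (f : En n → ℝ≥0∞) (x : En n) : f x ≤ trunc τ f x + τ := by
  unfold trunc
  by_cases h : τ < f x
  · simp [h, le_self_add]
  · simp only [h, if_false, zero_add]
    exact not_lt.1 h

lemma trunc_le (τ : ℝ≥0∞) (f : En n → ℝ≥0∞) (x : En n) : trunc τ f x ≤ f x := by
  unfold trunc; split <;> simp

lemma maximal_le_trunc (τ : ℝ≥0∞) (f : En n → ℝ≥0∞) (x : En n) :
    maximal f x ≤ maximal (trunc τ f) x + τ := by
  unfold maximal
  refine iSup_le fun c => iSup_le fun r => iSup_le fun hr => iSup_le fun hx => ?_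
  have h1 : (∫⁻ y in Cube c r, f y) ≤ (∫⁻ y in Cube c r, trunc τ f y) +
      τ * volume (Cube c r) := by
    calc (∫⁻ y in Cube c r, f y) ≤ ∫⁻ y in Cube c r, (trunc τ f y + τ) :=
          lintegral_mono (le_trunc_add τ f)
      _ = (∫⁻ y in Cube c r, trunc τ f y) + τ * volume (Cube c r) := by
          rw [lintegral_add_right _ measurable_const, setLIntegral_const]
  calc (∫⁻ y in Cube c r, f y) / volume (Cube c r)
      ≤ ((∫⁻ y in Cube c r, trunc τ f y) + τ * volume (Cube c r)) / volume (Cube c r) :=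
        ENNReal.div_le_div_right h1 _
    _ = (∫⁻ y in Cube c r, trunc τ f y) / volume (Cube c r) +
        (τ * volume (Cube c r)) / volume (Cube c r) := ENNReal.add_div
    _ ≤ maximal (trunc τ f) x + τ := by
        apply add_le_add (le_maximal hr hx)
        rw [mul_div_assoc, ENNReal.div_self (cube_volume_pos hr).ne' (cube_volume_ne_top c r),
          mul_one]

lemma mem_cube_zero {y : En n} {m : ℕ} (hm : ‖y‖ < m) : y ∈ Cube (0 : En n) (m+1) := by
  intro i
  have hyi : |y i| ≤ ‖y‖ := by
    rw [EuclideanSpace.norm_eq, ← Real.sqrt_sq_eq_abs]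
    apply Real.sqrt_le_sqrt
    have h2 := Finset.single_le_sum (f := fun j => ‖y j‖^2)
      (fun j _ => sq_nonneg _) (Finset.mem_univ i)
    simpa [Real.norm_eq_abs, sq_abs] using h2
  have h1 := abs_le.1 hyi
  have h0 : (0 : En n) i = 0 := rfl
  rw [h0]
  constructor <;> linarith [h1.1, h1.2]

lemma maximal_pos {g : En n → ℝ≥0∞} (hg0 : (∫⁻ x, g x) ≠ 0) (x : En n) :
    0 < maximal g x := by
  set μg := volume.withDensity g with hμg
  have happ : ∀ s : Set (En n), MeasurableSet s → μg s = ∫⁻ y in s, g y :=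
    fun s hs => withDensity_apply g hs
  have huniv : (⋃ m : ℕ, Cube (0 : En n) (m+1)) = Set.univ := by
    apply Set.eq_univ_of_forall
    intro y
    obtain ⟨m, hm⟩ := exists_nat_gt ‖y‖
    exact Set.mem_iUnion.2 ⟨m, mem_cube_zero hm⟩
  have hdir : Monotone (fun m : ℕ => Cube (0 : En n) (m+1)) := by
    intro a b hab
    apply cube_subset_cube
    have : (a:ℝ) ≤ b := Nat.cast_le.2 hab
    linarith
  have hμuniv : μg Set.univ ≠ 0 := by
    rw [happ _ MeasurableSet.univ, setLIntegral_univ]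
    exact hg0
  obtain ⟨m0, hm0⟩ : ∃ m : ℕ, μg (Cube (0 : En n) (m+1)) ≠ 0 := by
    by_contra h
    push_neg at h
    apply hμuniv
    rw [← huniv, hdir.directed_le.measure_iUnion]
    simp [h]
  obtain ⟨m1, hm1⟩ := exists_nat_gt ‖x‖
  set m := max m0 m1 with hm
  have hxmem : x ∈ Cube (0 : En n) (m+1) :=
    hdir (le_max_right m0 m1) (mem_cube_zero hm1)
  have hpos : 0 < ((m:ℝ)+1) := by positivity
  have hnum : (∫⁻ y in Cube (0 : En n) (m+1), g y) ≠ 0 := by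
    rw [← happ _ (measurableSet_cube _ _)]
    intro hzero
    apply hm0
    exact le_antisymm (hzero ▸ measure_mono (hdir (le_max_left m0 m1))) zero_le
  calc (0:ℝ≥0∞) < (∫⁻ y in Cube (0 : En n) (m+1), g y) / volume (Cube (0 : En n) (m+1)) :=
        ENNReal.div_pos hnum (cube_volume_ne_top _ _)
    _ ≤ maximal g x := le_maximal hpos hxmem

lemma rpow_sub_one_mul {a : ℝ≥0∞} {η : ℝ} (hη : 1 < η) : a^(η-1) * a = a^η := by
  rcases eq_or_ne a 0 with rfl | ha0
  · rw [ENNReal.zero_rpow_of_pos (by linarith), ENNReal.zero_rpow_of_pos (by linarith), zero_mul]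
  rcases eq_or_ne a ∞ with rfl | hat
  · rw [ENNReal.top_rpow_of_pos (by linarith), ENNReal.top_rpow_of_pos (by linarith),
      ENNReal.top_mul_top]
  · rw [show a^η = a^((η - 1) + 1) by norm_num, ENNReal.rpow_add _ _ ha0 hat, ENNReal.rpow_one]

lemma ofReal_toReal_rpow {a : ℝ≥0∞} (ha : a ≠ ∞) {p : ℝ} (hp : 0 ≤ p) :
    ENNReal.ofReal (a.toReal ^ p) = a ^ p := by
  rw [ENNReal.toReal_rpow, ENNReal.ofReal_toReal (ENNReal.rpow_ne_top_of_nonneg hp ha)]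

lemma lint_rpow_Ioo {b : ℝ} (hb : 0 ≤ b) {p : ℝ} (hp : -1 < p) :
    ∫⁻ t in Set.Ioo 0 b, ENNReal.ofReal (t^p) = ENNReal.ofReal (b^(p+1)/(p+1)) := by
  rw [Measure.restrict_congr_set Ioo_ae_eq_Ioc]
  have hint : IntegrableOn (fun t : ℝ => t ^ p) (Set.Ioc 0 b) volume := by
    have := intervalIntegral.intervalIntegrable_rpow' (a := 0) (b := b) hp
    rwa [intervalIntegrable_iff, Set.uIoc_of_le hb] at this
  have hnn : 0 ≤ᵐ[volume.restrict (Set.Ioc 0 b)] fun t : ℝ => t ^ p := by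
    filter_upwards [self_mem_ae_restrict measurableSet_Ioc] with t ht
    exact Real.rpow_nonneg ht.1.le p
  rw [← ofReal_integral_eq_lintegral_ofReal hint hnn]
  congr 1
  rw [← intervalIntegral.integral_of_le hb, integral_rpow (Or.inl hp)]
  rw [Real.zero_rpow (by linarith)]
  ring

lemma trunc_rpow_bound {η : ℝ} (hη : 1 < η) (τ : ℝ≥0∞) (f : En n → ℝ≥0∞) (x : En n) :
    τ^(η-1) * trunc τ f x ≤ f x ^ η := by
  unfold trunc
  split
  · rename_i h
    calc τ^(η-1) * f x ≤ f x^(η-1) * f x :=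
        mul_le_mul_left (ENNReal.rpow_le_rpow h.le (by linarith)) _
      _ = f x ^ η := rpow_sub_one_mul hη
  · simp

lemma mf_ae_finite {f g : En n → ℝ≥0∞} (hf : Measurable f) {η : ℝ} (hη : 1 < η)
    (hT : (∫⁻ x, f x ^ η * maximal g x) ≠ ∞) :
    volume.withDensity g {x | maximal f x = ∞} = 0 := by
  set μg := volume.withDensity g with hμg
  set T := ∫⁻ x, f x ^ η * maximal g x with hTdef
  set b := μg {x | maximal f x = ∞} with hb
  by_contra hb0
  have key : ∀ k : ℕ, ENNReal.ofReal ((k:ℝ)+1) * b ≤ 3^n * T := by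
    intro k
    set τ := ENNReal.ofReal ((k:ℝ)+1) with hτ
    have hτt : τ ≠ ∞ := ENNReal.ofReal_ne_top
    have hItau : τ^(η-1) * (∫⁻ x, trunc τ f x * maximal g x) ≤ T := by
      rw [← lintegral_const_mul' _ _ (ENNReal.rpow_ne_top_of_nonneg (by linarith) hτt)]
      apply lintegral_mono
      intro x
      show τ ^ (η-1) * (trunc τ f x * maximal g x) ≤ f x ^ η * maximal g x
      rw [← mul_assoc]
      exact mul_le_mul_left (trunc_rpow_bound hη τ f x) _
    have hsub : {x | maximal f x = ∞} ⊆ {x | τ < maximal (trunc τ f) x} := by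
      intro a ha
      have h2 : τ + τ < maximal f a := by
        rw [Set.mem_setOf_eq] at ha
        rw [ha]
        exact (ENNReal.add_lt_top.2 ⟨hτt.lt_top, hτt.lt_top⟩)
      have h3 := maximal_le_trunc τ f a
      have h4 : τ + τ < maximal (trunc τ f) a + τ := lt_of_lt_of_le h2 h3
      exact (ENNReal.add_lt_add_iff_right hτt).1 h4
    have hweak := weak_type (trunc τ f) g (measurable_trunc hf τ) τ
    have hμset : τ * b ≤ 3^n * ∫⁻ x, trunc τ f x * maximal g x := by
      refine le_trans ?_ hweak
      apply mul_le_mul_right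
      rw [← withDensity_apply g (isOpen_maximal_gt (trunc τ f) τ).measurableSet]
      exact measure_mono hsub
    have hchain : τ^(η-1) * (τ * b) ≤ 3^n * T := by
      calc τ^(η-1) * (τ * b) ≤ τ^(η-1) * (3^n * ∫⁻ x, trunc τ f x * maximal g x) :=
            mul_le_mul_right hμset _
        _ = 3^n * (τ^(η-1) * ∫⁻ x, trunc τ f x * maximal g x) := by ring
        _ ≤ 3^n * T := mul_le_mul_right hItau _
    have hτη : τ ≤ τ^η := by
      conv_lhs => rw [← ENNReal.rpow_one τ]
      apply ENNReal.rpow_le_rpow_of_exponent_le ?_ hη.le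
      rw [hτ]
      exact (ENNReal.one_le_ofReal).2 (by linarith [Nat.cast_nonneg (α := ℝ) k])
    calc τ * b ≤ τ^η * b := mul_le_mul_left hτη b
      _ = τ^(η-1) * (τ * b) := by rw [← mul_assoc, rpow_sub_one_mul hη]
      _ ≤ 3^n * T := hchain
  have hMfin : (3:ℝ≥0∞)^n * T ≠ ∞ := ENNReal.mul_ne_top three_pow_ne_top hT
  rcases eq_or_ne b ∞ with hbt | hbt
  · have h := key 0
    rw [hbt] at h
    simp only [Nat.cast_zero, zero_add, ENNReal.ofReal_one, one_mul] at h
    exact hMfin (top_le_iff.1 h)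
  · have hbr : 0 < b.toReal := ENNReal.toReal_pos hb0 hbt
    obtain ⟨k, hk⟩ := exists_nat_gt (((3:ℝ≥0∞)^n * T).toReal / b.toReal)
    have hlt : (3:ℝ≥0∞)^n * T < ENNReal.ofReal ((k:ℝ)+1) * b := by
      have h1 : ((3:ℝ≥0∞)^n * T).toReal < ((k:ℝ)+1) * b.toReal := by
        rw [div_lt_iff₀ hbr] at hk
        nlinarith [hk, hbr]
      calc (3:ℝ≥0∞)^n * T = ENNReal.ofReal (((3:ℝ≥0∞)^n * T).toReal) :=
            (ENNReal.ofReal_toReal hMfin).symm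
        _ < ENNReal.ofReal (((k:ℝ)+1) * b.toReal) :=
            ENNReal.ofReal_lt_ofReal_iff (by positivity) |>.2 h1
        _ = ENNReal.ofReal ((k:ℝ)+1) * ENNReal.ofReal (b.toReal) :=
            ENNReal.ofReal_mul (by positivity)
        _ = ENNReal.ofReal ((k:ℝ)+1) * b := by rw [ENNReal.ofReal_toReal hbt]
    exact absurd (key k) (not_le.2 hlt)

lemma tslice_bound {f g : En n → ℝ≥0∞} (hf : Measurable f) {t : ℝ} (ht : 0 < t)
    {η : ℝ} (hη : 1 < η) :
    volume.withDensity g {a | t < (maximal f a).toReal} * ENNReal.ofReal (t^(η-1)) ≤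
      3^n * ∫⁻ x, ENNReal.ofReal (2*t^(η-2)) *
        (trunc (ENNReal.ofReal (t/2)) f x * maximal g x) := by
  set μg := volume.withDensity g with hμg
  set τ := ENNReal.ofReal (t/2) with hτ
  have hτ0 : τ ≠ 0 := (ENNReal.ofReal_pos.2 (by linarith)).ne'
  have hτt : τ ≠ ∞ := ENNReal.ofReal_ne_top
  set I := ∫⁻ x, trunc τ f x * maximal g x with hI
  have hsub1 : {a | t < (maximal f a).toReal} ⊆ {a | τ < maximal (trunc τ f) a} := by
    intro a ha
    rw [Set.mem_setOf_eq] at ha ⊢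
    have h2 : ENNReal.ofReal t < maximal f a := by
      rcases eq_or_ne (maximal f a) ∞ with h | h
      · rw [h]; exact ENNReal.ofReal_lt_top
      · exact (ENNReal.ofReal_lt_iff_lt_toReal ht.le h).2 ha
    have h4 : ENNReal.ofReal t = τ + τ := by
      rw [hτ, ← ENNReal.ofReal_add (by linarith) (by linarith)]
      norm_num
    have h5 : τ + τ < maximal (trunc τ f) a + τ :=
      lt_of_lt_of_le (h4 ▸ h2) (maximal_le_trunc τ f a)
    exact (ENNReal.add_lt_add_iff_right hτt).1 h5
  have hweak := weak_type (trunc τ f) g (measurable_trunc hf τ) τ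
  have hμle : μg {a | t < (maximal f a).toReal} ≤ τ⁻¹ * (3^n * I) := by
    have h6 : μg {a | t < (maximal f a).toReal} ≤ μg {a | τ < maximal (trunc τ f) a} :=
      measure_mono hsub1
    have h7 : τ * μg {a | τ < maximal (trunc τ f) a} ≤ 3^n * I := by
      rw [hμg, withDensity_apply g (isOpen_maximal_gt (trunc τ f) τ).measurableSet]
      exact hweak
    calc μg {a | t < (maximal f a).toReal}
        ≤ μg {a | τ < maximal (trunc τ f) a} := h6
      _ = τ⁻¹ * (τ * μg {a | τ < maximal (trunc τ f) a}) := by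
          rw [← mul_assoc, ENNReal.inv_mul_cancel hτ0 hτt, one_mul]
      _ ≤ τ⁻¹ * (3^n * I) := mul_le_mul_right h7 _
  have hconst : τ⁻¹ * ENNReal.ofReal (t^(η-1)) = ENNReal.ofReal (2*t^(η-2)) := by
    have h1 : t^(η-2) = t^(η-1) / t := by
      rw [show η - 2 = (η-1) - 1 by ring, Real.rpow_sub ht, Real.rpow_one]
    rw [hτ, ← ENNReal.ofReal_inv_of_pos (by linarith), ← ENNReal.ofReal_mul (by positivity)]
    congr 1
    rw [h1, inv_div, div_mul_eq_mul_div, mul_div_assoc]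
  calc μg {a | t < (maximal f a).toReal} * ENNReal.ofReal (t^(η-1))
      ≤ (τ⁻¹ * (3^n * I)) * ENNReal.ofReal (t^(η-1)) := mul_le_mul_left hμle _
    _ = (τ⁻¹ * ENNReal.ofReal (t^(η-1))) * (3^n * I) := by ring
    _ = ENNReal.ofReal (2*t^(η-2)) * (3^n * I) := by rw [hconst]
    _ = 3^n * (ENNReal.ofReal (2*t^(η-2)) * I) := by ring
    _ = 3^n * ∫⁻ x, ENNReal.ofReal (2*t^(η-2)) * (trunc τ f x * maximal g x) := by
        rw [← lintegral_const_mul' _ _ ENNReal.ofReal_ne_top]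

lemma inner_t_integral {η : ℝ} (hη : 1 < η) {f : En n → ℝ≥0∞} {x : En n} (hx : f x ≠ ∞)
    (Mgx : ℝ≥0∞) :
    (∫⁻ t in Set.Ioi (0:ℝ), ENNReal.ofReal (2*t^(η-2)) *
        (trunc (ENNReal.ofReal (t/2)) f x * Mgx))
      = (ENNReal.ofReal 2 * (2:ℝ≥0∞)^(η-1) * ENNReal.ofReal ((η-1)⁻¹)) *
          (f x ^ (η-1) * (f x * Mgx)) := by
  set b := (2 * f x).toReal with hbdef
  have hb : 0 ≤ b := ENNReal.toReal_nonneg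
  have h2fx : (2 : ℝ≥0∞) * f x ≠ ∞ := ENNReal.mul_ne_top (by simp) hx
  have hbtoReal : b = 2 * (f x).toReal := by
    rw [hbdef, ENNReal.toReal_mul]; norm_num
  have hcond : ∀ t : ℝ, 0 < t → (ENNReal.ofReal (t/2) < f x ↔ t < b) := by
    intro t ht
    rw [ENNReal.ofReal_lt_iff_lt_toReal (by linarith) hx, hbtoReal]
    constructor <;> intro h <;> linarith
  have hfun : ∀ t ∈ Set.Ioi (0:ℝ),
      ENNReal.ofReal (2*t^(η-2)) * (trunc (ENNReal.ofReal (t/2)) f x * Mgx) =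
      (Set.Ioo (0:ℝ) b).indicator
        (fun t => ENNReal.ofReal (2*t^(η-2)) * (f x * Mgx)) t := by
    intro t ht
    rw [Set.mem_Ioi] at ht
    unfold trunc
    by_cases h : ENNReal.ofReal (t/2) < f x
    · rw [if_pos h, Set.indicator_of_mem (Set.mem_Ioo.2 ⟨ht, (hcond t ht).1 h⟩) _]
    · rw [if_neg h, Set.indicator_of_notMem]
      · rw [zero_mul, mul_zero]
      · intro hmem
        exact h ((hcond t ht).2 hmem.2)
  rw [setLIntegral_congr_fun measurableSet_Ioi hfun,
    lintegral_indicator measurableSet_Ioo, Measure.restrict_restrict measurableSet_Ioo,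
    Set.inter_eq_self_of_subset_left Set.Ioo_subset_Ioi_self]
  have hmeas : Measurable fun t : ℝ => ENNReal.ofReal (2*t^(η-2)) :=
    ((measurable_id.pow measurable_const).const_mul 2).ennreal_ofReal
  rw [lintegral_mul_const _ hmeas]
  have hsplit : ∀ t : ℝ, ENNReal.ofReal (2*t^(η-2)) =
      ENNReal.ofReal 2 * ENNReal.ofReal (t^(η-2)) := fun t =>
    ENNReal.ofReal_mul (by norm_num)
  simp_rw [hsplit]
  rw [lintegral_const_mul' _ _ ENNReal.ofReal_ne_top,
    lint_rpow_Ioo hb (by linarith : (-1:ℝ) < η - 2), show η - 2 + 1 = η - 1 by ring]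
  have hbr : ENNReal.ofReal (b^(η-1)/(η-1)) =
      (2:ℝ≥0∞)^(η-1) * ENNReal.ofReal ((η-1)⁻¹) * f x ^ (η-1) := by
    rw [div_eq_mul_inv, ENNReal.ofReal_mul (by positivity),
      ofReal_toReal_rpow h2fx (by linarith),
      ENNReal.mul_rpow_of_nonneg _ _ (by linarith : (0:ℝ) ≤ η - 1)]
    ring
  rw [hbr]
  ring


/-- the Fefferman–Stein dual inequality
`∫ (Mf)^η g ≤ C ∫ f^η Mg` for `η > 1`. -/
theorem statement19 {n : ℕ} (η : ℝ) (hη : 1 < η) :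
    ∃ C : ℝ≥0∞, 0 < C ∧ C ≠ ∞ ∧
      ∀ f g : En n → ℝ≥0∞, Measurable f → Measurable g →
        ∫⁻ x, maximal f x ^ η * g x ≤ C * ∫⁻ x, f x ^ η * maximal g x := by
  set c4 : ℝ≥0∞ := ENNReal.ofReal 2 * (2:ℝ≥0∞)^(η-1) * ENNReal.ofReal ((η-1)⁻¹) with hc4
  have hc4t : c4 ≠ ∞ :=
    ENNReal.mul_ne_top (ENNReal.mul_ne_top ENNReal.ofReal_ne_top
      (ENNReal.rpow_ne_top_of_nonneg (by linarith) (by simp))) ENNReal.ofReal_ne_top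
  set C0 : ℝ≥0∞ := ENNReal.ofReal η * ((3:ℝ≥0∞)^n * c4) with hC0
  have hC0t : C0 ≠ ∞ :=
    ENNReal.mul_ne_top ENNReal.ofReal_ne_top (ENNReal.mul_ne_top three_pow_ne_top hc4t)
  have hCpos : (0:ℝ≥0∞) < C0 + 1 := lt_of_lt_of_le zero_lt_one le_add_self
  refine ⟨C0 + 1, hCpos, ENNReal.add_ne_top.2 ⟨hC0t, ENNReal.one_ne_top⟩, ?_⟩
  intro f g hf hg
  by_cases hg0 : (∫⁻ x, g x) = 0
  · have hgz : g =ᵐ[volume] 0 := (lintegral_eq_zero_iff hg).1 hg0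
    have hzero : (∫⁻ x, maximal f x ^ η * g x) = 0 := by
      rw [← lintegral_zero]
      apply lintegral_congr_ae
      filter_upwards [hgz] with x hx
      simp [hx]
    rw [hzero]
    exact zero_le
  by_cases hT : (∫⁻ x, f x ^ η * maximal g x) = ∞
  · rw [hT, ENNReal.mul_top hCpos.ne']
    exact le_top
  set T := ∫⁻ x, f x ^ η * maximal g x with hTdef
  set μg := volume.withDensity g with hμg
  have hMgpos : ∀ x, 0 < maximal g x := maximal_pos hg0
  have hffin : ∀ᵐ x, f x ≠ ∞ := by
    rw [ae_iff]
    simp only [not_not]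
    by_contra hS0
    apply hT
    refine top_le_iff.1 ?_
    calc (⊤:ℝ≥0∞) = ∫⁻ _ in {x | f x = ∞}, ⊤ := by
          rw [setLIntegral_const, ENNReal.top_mul hS0]
      _ ≤ ∫⁻ x in {x | f x = ∞}, f x ^ η * maximal g x := by
          apply setLIntegral_mono' (hf (measurableSet_singleton ∞))
          intro x hx
          have hx' : f x = ⊤ := hx
          rw [hx', ENNReal.top_rpow_of_pos (by linarith), ENNReal.top_mul (hMgpos x).ne']
      _ ≤ T := setLIntegral_le_lintegral _ _
  have hMf := measurable_maximal (f := f)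
  have hMfη : Measurable fun x => maximal f x ^ η := hMf.pow measurable_const
  have h0 : μg {x | maximal f x = ∞} = 0 := mf_ae_finite hf hη hT
  have hne : ∀ᵐ x ∂μg, maximal f x ≠ ∞ := by
    rw [ae_iff]
    simpa [not_not] using h0
  have hF_nn : 0 ≤ᵐ[μg] fun x => (maximal f x).toReal :=
    ae_of_all _ fun x => ENNReal.toReal_nonneg
  have hF_mble : AEMeasurable (fun x => (maximal f x).toReal) μg :=
    hMf.ennreal_toReal.aemeasurable
  have hGmeas : Measurable fun p : ℝ × En n =>
      ENNReal.ofReal (2*p.1^(η-2)) * (trunc (ENNReal.ofReal (p.1/2)) f p.2 * maximal g p.2) := by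
    have m1 : Measurable fun p : ℝ × En n => ENNReal.ofReal (2*p.1^(η-2)) :=
      (((measurable_fst.pow measurable_const)).const_mul 2).ennreal_ofReal
    have m2 : Measurable fun p : ℝ × En n => trunc (ENNReal.ofReal (p.1/2)) f p.2 := by
      unfold trunc
      exact Measurable.ite
        (measurableSet_lt ((measurable_fst.div_const 2).ennreal_ofReal)
          (hf.comp measurable_snd))
        (hf.comp measurable_snd) measurable_const
    exact m1.mul (m2.mul ((measurable_maximal g).comp measurable_snd))
  have hswap : (∫⁻ t in Set.Ioi (0:ℝ), ∫⁻ x, ENNReal.ofReal (2*t^(η-2)) *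
        (trunc (ENNReal.ofReal (t/2)) f x * maximal g x))
      = ∫⁻ x, ∫⁻ t in Set.Ioi (0:ℝ), ENNReal.ofReal (2*t^(η-2)) *
        (trunc (ENNReal.ofReal (t/2)) f x * maximal g x) :=
    lintegral_lintegral_swap hGmeas.aemeasurable
  calc ∫⁻ x, maximal f x ^ η * g x
      = ∫⁻ x, (g * fun y => maximal f y ^ η) x := lintegral_congr fun x => mul_comm _ _
    _ = ∫⁻ x, maximal f x ^ η ∂μg :=
        (lintegral_withDensity_eq_lintegral_mul volume hg hMfη).symm
    _ = ∫⁻ x, ENNReal.ofReal ((maximal f x).toReal ^ η) ∂μg := by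
        apply lintegral_congr_ae
        filter_upwards [hne] with x hx
        rw [ofReal_toReal_rpow hx (by linarith)]
    _ = ENNReal.ofReal η * ∫⁻ t in Set.Ioi 0,
          μg {a | t < (maximal f a).toReal} * ENNReal.ofReal (t^(η-1)) :=
        lintegral_rpow_eq_lintegral_meas_lt_mul μg hF_nn hF_mble (by linarith)
    _ ≤ ENNReal.ofReal η * ∫⁻ t in Set.Ioi 0, 3^n * ∫⁻ x, ENNReal.ofReal (2*t^(η-2)) *
          (trunc (ENNReal.ofReal (t/2)) f x * maximal g x) := by
        apply mul_le_mul_right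
        apply lintegral_mono_ae
        filter_upwards [self_mem_ae_restrict measurableSet_Ioi] with t ht
        exact tslice_bound hf ht hη
    _ = ENNReal.ofReal η * (3^n * ∫⁻ x, ∫⁻ t in Set.Ioi (0:ℝ), ENNReal.ofReal (2*t^(η-2)) *
          (trunc (ENNReal.ofReal (t/2)) f x * maximal g x)) := by
        rw [lintegral_const_mul' _ _ three_pow_ne_top, hswap]
    _ = ENNReal.ofReal η * (3^n * ∫⁻ x, c4 * (f x ^ η * maximal g x)) := by
        congr 2
        apply lintegral_congr_ae
        filter_upwards [hffin] with x hx
        rw [inner_t_integral hη hx (maximal g x)]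
        congr 1
        rw [← mul_assoc, rpow_sub_one_mul hη]
    _ = C0 * T := by
        rw [lintegral_const_mul' _ _ hc4t, hC0, hTdef]
        ring
    _ ≤ (C0 + 1) * T := mul_le_mul_left le_self_add T
end
end
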